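/- Let X and Y be independent real-valued random variables on a probability space, and let β and γ be real numbers with 0 < β < γ, such that |X| ≤ β almost surely and Y is uniformly distributed on the interval [-γ, γ]. Then the mutual information between X and X+Y satisfies I(X; X+Y) ≤ (β/γ)·ln 2 (that is, at most β/γ bits). -/

import Mathlib

open MeasureTheory ProbabilityTheory
open scoped Classical

open scoped ENNReal

section AuxLemmas

lemma aux_philog {t : ℝ} (ht : 0 ≤ t) :
    -(t * Real.log t) ≤ 1/2 + (Real.log 2 - 1) * t := by
  rcases eq_or_lt_of_le ht with h | h
  · norm_num [← h]
  · have := Real.log_le_sub_one_of_pos (x := (2*t)⁻¹) (by positivity)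
    rw [Real.log_inv, Real.log_mul (by norm_num) h.ne'] at this
    have h4 : t * (-(Real.log 2 + Real.log t)) ≤ t * ((2*t)⁻¹ - 1) :=
      mul_le_mul_of_nonneg_left this ht
    have h5 : t * (2*t)⁻¹ = 1/2 := by field_simp
    nlinarith [h4, h5]

lemma aux_prod_withDensity {ν : Measure ℝ} [SFinite ν] {m : Measure ℝ} [SigmaFinite m]
    {k : ℝ → ℝ≥0∞} (hk : Measurable k) :
    ν.prod (m.withDensity k) = (ν.prod m).withDensity (fun p => k p.2) := by
  ext s hs
  rw [Measure.prod_apply hs, withDensity_apply _ hs,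
    ← lintegral_indicator hs]
  have : ∀ x : ℝ, (m.withDensity k) (Prod.mk x ⁻¹' s)
      = ∫⁻ y, (Set.indicator s (fun p => k p.2)) (x, y) ∂m := by
    intro x
    rw [withDensity_apply _ (measurable_prodMk_left hs),
      ← lintegral_indicator (measurable_prodMk_left hs)]
    refine lintegral_congr fun y => ?_
    by_cases hxy : (x, y) ∈ s <;> simp [Set.indicator, hxy]
  simp_rw [this]
  have hm : Measurable (Set.indicator s fun p : ℝ × ℝ => k p.2) :=
    Measurable.indicator (hk.comp measurable_snd) hs
  exact (MeasureTheory.lintegral_prod _ hm.aemeasurable).symm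

lemma aux_map_withDensity {α β : Type*} [MeasurableSpace α] [MeasurableSpace β]
    (e : α ≃ᵐ β) (m : Measure α) {d : α → ℝ≥0∞} (hd : Measurable d) :
    (m.withDensity d).map e = (m.map e).withDensity (d ∘ e.symm) := by
  ext s hs
  rw [Measure.map_apply e.measurable hs, withDensity_apply _ (e.measurable hs),
    withDensity_apply _ hs, ← lintegral_indicator (e.measurable hs),
    ← lintegral_indicator hs, lintegral_map_equiv _ e]
  congr 1 with a
  by_cases ha : e a ∈ s <;> simp [Set.indicator, ha, e.symm_apply_apply]

noncomputable def shearEquiv : (ℝ × ℝ) ≃ᵐ (ℝ × ℝ) where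
  toFun p := (p.1, p.1 + p.2)
  invFun p := (p.1, p.2 - p.1)
  left_inv p := by simp
  right_inv p := by simp
  measurable_toFun := measurable_fst.prodMk (measurable_fst.add measurable_snd)
  measurable_invFun := measurable_fst.prodMk (measurable_snd.sub measurable_fst)

lemma shear_preserving (ν : Measure ℝ) [SFinite ν] :
    MeasurePreserving shearEquiv (ν.prod volume) (ν.prod volume) :=
  MeasurePreserving.skew_product (MeasurePreserving.id ν)
    (measurable_fst.add measurable_snd)
    (Filter.Eventually.of_forall fun x => MeasureTheory.map_add_left_eq_self volume x)

end AuxLemmas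

/-- The Kullback–Leibler divergence between two measures, in nats:
the integral of the log-likelihood ratio when `μ ≪ ν` and the ratio is integrable,
and `⊤` otherwise. -/
noncomputable def klDiv {α : Type*} [MeasurableSpace α] (μ ν : Measure α) : EReal :=
  if μ ≪ ν ∧ Integrable (llr μ ν) μ then ((∫ x, llr μ ν x ∂μ : ℝ) : EReal) else ⊤

/-- The mutual information `I(X; W)` (in nats) between two random variables on a common
probability space: the KL divergence of the law of the pair `(X, W)` from the product
of the laws of `X` and of `W`. -/
noncomputable def mutualInfo {Ω α β : Type*} [MeasurableSpace Ω] [MeasurableSpace α]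
    [MeasurableSpace β] (μ : Measure Ω) (X : Ω → α) (W : Ω → β) : EReal :=
  klDiv (μ.map (fun ω => (X ω, W ω))) ((μ.map X).prod (μ.map W))

theorem information_leak_bound {Ω : Type*} [MeasurableSpace Ω]
    (μ : Measure Ω) [IsProbabilityMeasure μ]
    (X Y : Ω → ℝ) (hX : Measurable X) (hY : Measurable Y)
    (hindep : IndepFun X Y μ)
    (β γ : ℝ) (hβ : 0 < β) (hβγ : β < γ)
    (hXbd : ∀ᵐ ω ∂μ, |X ω| ≤ β)
    (hYunif : pdf.IsUniform Y (Set.Icc (-γ) γ) μ volume) :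
    mutualInfo μ X (fun ω => X ω + Y ω) ≤ ((β / γ * Real.log 2 : ℝ) : EReal) := by
  have hγ : (0:ℝ) < γ := hβ.trans hβγ
  have h2γ : (0:ℝ) < 2*γ := by linarith
  set ν : Measure ℝ := μ.map X with hν_def
  have : IsProbabilityMeasure ν := Measure.isProbabilityMeasure_map hX.aemeasurable
  have hXY : Measurable fun ω => (X ω, Y ω) := hX.prodMk hY
  have hpair : Measurable fun ω => (X ω, X ω + Y ω) := hX.prodMk (hX.add hY)
  have hν1 : ν (Set.Icc (-β) β) = 1 := by
    rw [hν_def, Measure.map_apply hX measurableSet_Icc, ← measure_univ (μ := μ)]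
    refine measure_congr (Filter.eventuallyEq_univ.mpr ?_)
    filter_upwards [hXbd] with ω h
    simpa [Set.mem_preimage, Set.mem_Icc] using abs_le.mp h
  set c : ℝ≥0∞ := ENNReal.ofReal (2*γ) with hc_def
  have hc0 : c ≠ 0 := by simp [hc_def, h2γ, hγ]
  have hctop : c ≠ ⊤ := ENNReal.ofReal_ne_top
  have hcitop : c⁻¹ ≠ ⊤ := by simp [hc0]
  have hci0 : c⁻¹ ≠ 0 := by simp [hctop]
  set k : ℝ → ℝ≥0∞ := (Set.Icc (-γ) γ).indicator (fun _ => c⁻¹) with hk_def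
  have hk_meas : Measurable k := measurable_const.indicator measurableSet_Icc
  have hk_le : ∀ y, k y ≤ c⁻¹ := fun y => Set.indicator_apply_le (fun _ => le_rfl)
  have hκ : μ.map Y = volume.withDensity k := by
    rw [hYunif, hk_def, withDensity_indicator measurableSet_Icc, withDensity_const,
      ProbabilityTheory.cond, Real.volume_Icc, hc_def]
    congr 2
    ring_nf
  set J : Measure (ℝ × ℝ) := μ.map (fun ω => (X ω, X ω + Y ω)) with hJ_def
  have : IsProbabilityMeasure J := Measure.isProbabilityMeasure_map hpair.aemeasurable
  set D : ℝ × ℝ → ℝ≥0∞ := fun p => k (p.2 - p.1) with hD_def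
  have hD_meas : Measurable D := hk_meas.comp (measurable_snd.sub measurable_fst)
  have hJ : J = (ν.prod volume).withDensity D := by
    have h1 : J = (μ.map (fun ω => (X ω, Y ω))).map shearEquiv := by
      rw [Measure.map_map shearEquiv.measurable hXY]; rfl
    rw [h1, (indepFun_iff_map_prod_eq_prod_map_map hX.aemeasurable hY.aemeasurable).mp hindep,
      hκ, aux_prod_withDensity hk_meas,
      aux_map_withDensity (d := fun p : ℝ × ℝ => k p.2) shearEquiv _ (hk_meas.comp measurable_snd),
      (shear_preserving ν).map_eq]
    rfl
  set f : ℝ → ℝ≥0∞ := fun w => ∫⁻ x, k (w - x) ∂ν with hf_def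
  have hf_meas : Measurable f := by
    have : Measurable fun p : ℝ × ℝ => k (p.1 - p.2) :=
      hk_meas.comp (measurable_fst.sub measurable_snd)
    exact this.lintegral_prod_right'
  have hf_le : ∀ w, f w ≤ c⁻¹ := by
    intro w
    calc f w ≤ ∫⁻ _, c⁻¹ ∂ν := lintegral_mono fun x => hk_le _
    _ = c⁻¹ := by simp
  have hf_top : ∀ w, f w ≠ ⊤ := fun w => (lt_of_le_of_lt (hf_le w) (lt_top_iff_ne_top.mpr hcitop)).ne
  have hmW : J.map Prod.snd = volume.withDensity f := by
    ext A hA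
    have hmeas : Measurable ((Prod.snd ⁻¹' A).indicator D) := hD_meas.indicator (measurable_snd hA)
    have hunc : AEMeasurable
        (Function.uncurry fun x y : ℝ => (Prod.snd ⁻¹' A).indicator D (x, y)) (ν.prod volume) :=
      hmeas.aemeasurable
    rw [Measure.map_apply measurable_snd hA, hJ, withDensity_apply _ (measurable_snd hA),
      withDensity_apply _ hA, ← lintegral_indicator (measurable_snd hA),
      MeasureTheory.lintegral_prod _ hmeas.aemeasurable,
      lintegral_lintegral_swap hunc, ← lintegral_indicator hA]
    refine lintegral_congr fun w => ?_
    by_cases hw : w ∈ A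
    · have : ∀ x : ℝ, (Prod.snd ⁻¹' A).indicator D (x, w) = k (w - x) := by
        intro x; simp [Set.indicator, hw, hD_def]
      simp only [this]
      simp [Set.indicator, hw, hf_def]
    · have : ∀ x : ℝ, (Prod.snd ⁻¹' A).indicator D (x, w) = 0 := by
        intro x; simp [Set.indicator, hw]
      simp only [this]
      simp [Set.indicator, hw]
  have : IsProbabilityMeasure (volume.withDensity f) :=
    hmW ▸ Measure.isProbabilityMeasure_map measurable_snd.aemeasurable
  have hWlaw : μ.map (fun ω => X ω + Y ω) = volume.withDensity f := by
    rw [← hmW, hJ_def, Measure.map_map measurable_snd hpair]; rfl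
  set P : Measure (ℝ × ℝ) := ν.prod (volume.withDensity f) with hP_def
  have : IsProbabilityMeasure P := by infer_instance
  have hP : P = (ν.prod volume).withDensity (fun p => f p.2) := aux_prod_withDensity hf_meas
  set ρ : ℝ × ℝ → ℝ≥0∞ := fun p => (f p.2)⁻¹ * D p with hρ_def
  have hρ_meas : Measurable ρ := ((hf_meas.comp measurable_snd).inv).mul hD_meas
  have hJP : J = P.withDensity ρ := by
    have hNmeas : MeasurableSet {p : ℝ × ℝ | f p.2 = 0 ∧ D p ≠ 0} :=
      ((hf_meas.comp measurable_snd) (measurableSet_singleton 0)).inter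
        ((hD_meas (measurableSet_singleton 0)).compl)
    have hN : ∀ᵐ p ∂(ν.prod volume), ¬(f p.2 = 0 ∧ D p ≠ 0) := by
      rw [ae_iff]
      simp only [not_not]
      rw [Measure.prod_apply_symm (by simpa using hNmeas)]
      have hz : ∀ w : ℝ, ν ((fun x => (x, w)) ⁻¹' {p : ℝ × ℝ | f p.2 = 0 ∧ D p ≠ 0}) = 0 := by
        intro w
        by_cases hw : f w = 0
        · have hkm : Measurable fun x : ℝ => k (w - x) :=
            hk_meas.comp (measurable_const.sub measurable_id')
          have h0 : ∀ᵐ x ∂ν, k (w - x) = 0 := by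
            have := (lintegral_eq_zero_iff hkm).mp hw
            filter_upwards [this] with x hx using hx
          have := ae_iff.mp h0
          refine le_antisymm (le_trans (measure_mono ?_) this.le) (by simp)
          intro x hx
          simpa [hD_def] using hx.2
        · have : ((fun x : ℝ => (x, w)) ⁻¹' {p : ℝ × ℝ | f p.2 = 0 ∧ D p ≠ 0}) = ∅ := by
            ext x; simp [hw]
          simp [this]
      simp only [hz]
      simp
    have hfsnd : Measurable fun p : ℝ × ℝ => f p.2 := hf_meas.comp measurable_snd
    rw [hP, ← withDensity_mul _ hfsnd hρ_meas, hJ]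
    refine withDensity_congr_ae ?_
    filter_upwards [hN] with p hp
    by_cases h0 : f p.2 = 0
    · have hD0 : D p = 0 := by
        by_contra hD0; exact hp ⟨h0, hD0⟩
      simp [hD0, h0, hρ_def]
    · show D p = ((fun q : ℝ × ℝ => f q.2) * ρ) p
      simp only [Pi.mul_apply, hρ_def]
      rw [← mul_assoc, ENNReal.mul_inv_cancel h0 (hf_top _), one_mul]
  have hac : J ≪ P := hJP ▸ withDensity_absolutelyContinuous P ρ
  have hrnJ : J.rnDeriv P =ᵐ[J] ρ := hac.ae_le (hJP ▸ Measure.rnDeriv_withDensity P hρ_meas)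
  have hJD : ∀ᵐ p ∂J, D p = c⁻¹ := by
    rw [ae_iff]
    have hsub : {p : ℝ × ℝ | ¬ D p = c⁻¹} ⊆ {p : ℝ × ℝ | D p = 0} := by
      intro p hp
      by_cases hm : p.2 - p.1 ∈ Set.Icc (-γ) γ
      · exact absurd (Set.indicator_of_mem hm _) hp
      · exact Set.indicator_of_notMem hm _
    have hDset : MeasurableSet {p : ℝ × ℝ | D p = 0} := hD_meas (measurableSet_singleton 0)
    refine measure_mono_null hsub ?_
    rw [hJ, withDensity_apply _ hDset,
      setLIntegral_congr_fun hDset (fun p hp => hp)]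
    simp
  have hJf : ∀ᵐ p ∂J, f p.2 ≠ 0 := by
    rw [ae_iff]
    have hset : MeasurableSet {w : ℝ | f w = 0} := hf_meas (measurableSet_singleton 0)
    have hrw : {p : ℝ × ℝ | ¬ f p.2 ≠ 0} = Prod.snd ⁻¹' {w : ℝ | f w = 0} := by
      ext p; simp
    rw [hrw, ← Measure.map_apply measurable_snd hset, hmW, withDensity_apply _ hset,
      setLIntegral_congr_fun hset (fun w hw => hw)]
    simp
  set G : ℝ → ℝ := fun w => (2*γ) * (f w).toReal with hG_def
  have hG_meas : Measurable G := (hf_meas.ennreal_toReal).const_mul _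
  have hG_nonneg : ∀ w, 0 ≤ G w := fun w => by positivity
  have hG_le_one : ∀ w, G w ≤ 1 := by
    intro w
    have h1 : (f w).toReal ≤ (2*γ)⁻¹ := by
      have := ENNReal.toReal_mono hcitop (hf_le w)
      rwa [ENNReal.toReal_inv, hc_def, ENNReal.toReal_ofReal h2γ.le] at this
    calc G w = 2*γ * (f w).toReal := rfl
    _ ≤ 2*γ * (2*γ)⁻¹ := by nlinarith
    _ = 1 := mul_inv_cancel₀ h2γ.ne'
  have hllr : llr J P =ᵐ[J] fun p => -Real.log (G p.2) := by
    filter_upwards [hrnJ, hJD, hJf] with p h1 h2 h3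
    have hd : llr J P p = Real.log (J.rnDeriv P p).toReal := rfl
    rw [hd, h1, hρ_def]
    simp only []
    rw [h2, ENNReal.toReal_mul, ENNReal.toReal_inv, ENNReal.toReal_inv, hc_def,
      ENNReal.toReal_ofReal h2γ.le, ← mul_inv, Real.log_inv, hG_def]
    simp only []
    rw [mul_comm]
  -- the set E and real-analysis facts
  have hae : ∀ᵐ x ∂ν, x ∈ Set.Icc (-β) β :=
    ae_iff.mpr ((prob_compl_eq_zero_iff (μ := ν) measurableSet_Icc).mpr hν1)
  have hG_one : ∀ w, |w| ≤ γ - β → G w = 1 := by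
    intro w hw
    have hfw : f w = c⁻¹ := by
      have : ∀ᵐ x ∂ν, k (w - x) = c⁻¹ := by
        filter_upwards [hae] with x hx
        have hx' := abs_le.mp (abs_le.mpr (Set.mem_Icc.mp hx) : |x| ≤ β)
        have hw' := abs_le.mp hw
        have : w - x ∈ Set.Icc (-γ) γ := Set.mem_Icc.mpr ⟨by linarith, by linarith⟩
        exact Set.indicator_of_mem this _
      rw [hf_def]
      simp only []
      rw [lintegral_congr_ae this, lintegral_const, measure_univ, mul_one]
    rw [hG_def]
    simp only [hfw]
    rw [ENNReal.toReal_inv, hc_def, ENNReal.toReal_ofReal h2γ.le]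
    exact mul_inv_cancel₀ h2γ.ne'
  have hG_zero' : ∀ w, γ + β < |w| → f w = 0 := by
    intro w hw
    have : ∀ᵐ x ∂ν, k (w - x) = 0 := by
      filter_upwards [hae] with x hx
      have hx' := abs_le.mp (abs_le.mpr (Set.mem_Icc.mp hx) : |x| ≤ β)
      have : w - x ∉ Set.Icc (-γ) γ := by
        intro hmem
        rcases Set.mem_Icc.mp hmem with ⟨h1', h2'⟩
        rcases le_or_gt 0 w with hw0 | hw0
        · rw [abs_of_nonneg hw0] at hw; linarith
        · rw [abs_of_neg hw0] at hw; linarith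
      exact Set.indicator_of_notMem this _
    rw [hf_def]
    simp only []
    rw [lintegral_congr_ae this, lintegral_zero]
  have hf1 : ∫⁻ w, f w = 1 := by
    have := measure_univ (μ := volume.withDensity f)
    rwa [withDensity_apply _ MeasurableSet.univ, Measure.restrict_univ] at this
  have hG_int : Integrable G := by
    refine Integrable.const_mul ?_ (2*γ)
    exact integrable_toReal_of_lintegral_ne_top hf_meas.aemeasurable (by rw [hf1]; simp)
  have hG_total : ∫ w, G w = 2*γ := by
    have h1 : ∫ w, (f w).toReal = 1 := by
      rw [integral_toReal hf_meas.aemeasurable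
        (Filter.Eventually.of_forall fun w => lt_top_iff_ne_top.mpr (hf_top w)), hf1]
      rfl
    rw [hG_def]
    simp only []
    rw [integral_const_mul, h1, mul_one]
  -- integrand ψ and its bound χ
  set ψ : ℝ → ℝ := fun w => -Real.log (G w) * (f w).toReal with hψ_def
  set E : Set ℝ := Set.Icc (-(γ+β)) (-(γ-β)) ∪ Set.Icc (γ-β) (γ+β) with hE_def
  have hE_meas : MeasurableSet E := (measurableSet_Icc).union measurableSet_Icc
  set χ : ℝ → ℝ := fun w => (2*γ)⁻¹ * E.indicator (fun w => 1/2 + (Real.log 2 - 1) * G w) w with hχ_def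
  have hEc : ∀ w : ℝ, w ∉ E → |w| < γ - β ∨ γ + β < |w| := by
    intro w hw
    by_contra h
    push_neg at h
    obtain ⟨h1, h2⟩ := h
    apply hw
    rw [hE_def]
    rcases le_or_gt 0 w with h0 | h0
    · right; rw [abs_of_nonneg h0] at h1 h2; exact Set.mem_Icc.mpr ⟨h1, h2⟩
    · left; rw [abs_of_neg h0] at h1 h2; exact Set.mem_Icc.mpr ⟨by linarith, by linarith⟩
  have hψχ : ∀ w, ψ w ≤ χ w := by
    intro w
    by_cases hw : w ∈ E
    · rw [hχ_def]
      simp only [Set.indicator_of_mem hw]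
      have hfw : (f w).toReal = (2*γ)⁻¹ * G w := by
        rw [hG_def]; simp only []; field_simp
      have h2 := mul_le_mul_of_nonneg_left (aux_philog (hG_nonneg w))
        (le_of_lt (inv_pos.mpr h2γ))
      calc ψ w = -Real.log (G w) * (f w).toReal := rfl
      _ = (2*γ)⁻¹ * (-(G w * Real.log (G w))) := by rw [hfw]; ring
      _ ≤ (2*γ)⁻¹ * (1/2 + (Real.log 2 - 1) * G w) := h2
    · have hχ0 : χ w = 0 := by
        rw [hχ_def]; simp only [Set.indicator_of_notMem hw, mul_zero]
      rw [hχ0]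
      rcases hEc w hw with h | h
      · show -Real.log (G w) * (f w).toReal ≤ 0
        rw [hG_one w h.le, Real.log_one]; simp
      · show -Real.log (G w) * (f w).toReal ≤ 0
        rw [hG_zero' w h]; simp
  have hψ_nonneg : ∀ w, 0 ≤ ψ w := fun w =>
    mul_nonneg (neg_nonneg.mpr (Real.log_nonpos (hG_nonneg w) (hG_le_one w)))
      ENNReal.toReal_nonneg
  have hψ_meas : Measurable ψ := ((hG_meas.log).neg).mul hf_meas.ennreal_toReal
  have hEfin : volume E < ⊤ := by
    refine lt_of_le_of_lt (measure_union_le _ _) ?_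
    rw [Real.volume_Icc, Real.volume_Icc]
    exact ENNReal.add_lt_top.mpr ⟨ENNReal.ofReal_lt_top, ENNReal.ofReal_lt_top⟩
  have hχ_int : Integrable χ := by
    have hIntOn : IntegrableOn (fun w => 1/2 + (Real.log 2 - 1) * G w) E volume :=
      (integrableOn_const hEfin.ne).add ((hG_int.const_mul _).integrableOn)
    exact (hIntOn.integrable_indicator hE_meas).const_mul _
  have hψ_int : Integrable ψ :=
    hχ_int.mono' hψ_meas.aestronglyMeasurable
      (Filter.Eventually.of_forall fun w => by
        rw [Real.norm_eq_abs, abs_of_nonneg (hψ_nonneg w)]; exact hψχ w)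
  have hχ_val : ∫ w, χ w ≤ β / γ * Real.log 2 := by
    have hdisj : Disjoint (Set.Icc (-(γ+β)) (-(γ-β))) (Set.Icc (γ-β) (γ+β)) := by
      refine Set.disjoint_left.mpr ?_
      intro w hw1 hw2
      rcases Set.mem_Icc.mp hw1 with ⟨_, h1⟩
      rcases Set.mem_Icc.mp hw2 with ⟨h2, _⟩
      linarith
    have hvolE : (volume E).toReal = 4*β := by
      rw [hE_def, measure_union hdisj measurableSet_Icc, Real.volume_Icc, Real.volume_Icc,
        ← ENNReal.ofReal_add (by linarith) (by linarith),
        ENNReal.toReal_ofReal (by linarith)]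
      ring
    have hEG : 2*β ≤ ∫ w in E, G w := by
      have hsplit := integral_add_compl hE_meas hG_int
      have hind_int : Integrable ((Set.Icc (-(γ-β)) (γ-β)).indicator (fun _ => (1:ℝ))) := by
        refine IntegrableOn.integrable_indicator ?_ measurableSet_Icc
        exact integrableOn_const (by rw [Real.volume_Icc]; exact ENNReal.ofReal_ne_top)
      have hcompl : ∫ w in Eᶜ, G w ≤ 2*(γ-β) := by
        have step1 : ∫ w in Eᶜ, G w
            ≤ ∫ w in Eᶜ, (Set.Icc (-(γ-β)) (γ-β)).indicator (fun _ => (1:ℝ)) w := by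
          refine setIntegral_mono_on hG_int.integrableOn hind_int.integrableOn
            hE_meas.compl ?_
          intro w hw
          rcases hEc w hw with h | h
          · have hmem : w ∈ Set.Icc (-(γ-β)) (γ-β) := by
              rcases abs_lt.mp h with ⟨ha, hb⟩
              exact Set.mem_Icc.mpr ⟨by linarith, by linarith⟩
            rw [Set.indicator_of_mem hmem]
            exact hG_le_one w
          · have : f w = 0 := hG_zero' w h
            have hGw : G w = 0 := by rw [hG_def]; simp only []; rw [this]; simp
            rw [hGw]
            exact Set.indicator_nonneg (fun _ _ => by norm_num) w
        have step2 : ∫ w in Eᶜ, (Set.Icc (-(γ-β)) (γ-β)).indicator (fun _ => (1:ℝ)) w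
            ≤ ∫ w, (Set.Icc (-(γ-β)) (γ-β)).indicator (fun _ => (1:ℝ)) w :=
          setIntegral_le_integral hind_int
            (Filter.Eventually.of_forall fun w => Set.indicator_nonneg (fun _ _ => by norm_num) w)
        have step3 : ∫ w, (Set.Icc (-(γ-β)) (γ-β)).indicator (fun _ => (1:ℝ)) w = 2*(γ-β) := by
          rw [integral_indicator measurableSet_Icc, setIntegral_const, measureReal_def, Real.volume_Icc,
            ENNReal.toReal_ofReal (by linarith), smul_eq_mul, mul_one]
          ring
        linarith
      linarith [hG_total]
    have hconst_int : IntegrableOn (fun _ : ℝ => (1:ℝ)/2) E volume :=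
      integrableOn_const hEfin.ne
    have hsum : ∫ w, χ w
        = (2*γ)⁻¹ * ((volume E).toReal * (1/2) + (Real.log 2 - 1) * ∫ w in E, G w) := by
      rw [hχ_def]
      simp only []
      rw [integral_const_mul, integral_indicator hE_meas,
        integral_add hconst_int ((hG_int.const_mul _).integrableOn),
        setIntegral_const, measureReal_def, integral_const_mul, smul_eq_mul]
    rw [hsum, hvolE]
    have hlog2' : Real.log 2 < 1 := by
      have := Real.log_two_lt_d9; linarith
    have hγinv : (0:ℝ) < (2*γ)⁻¹ := inv_pos.mpr h2γ
    have hmono : (Real.log 2 - 1) * ∫ w in E, G w ≤ (Real.log 2 - 1) * (2*β) := by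
      nlinarith [hEG]
    have hid : (2*γ)⁻¹ * (2*β*Real.log 2) = β/γ * Real.log 2 := by
      field_simp
    have step : (2*γ)⁻¹ * (4*β*(1/2) + (Real.log 2 - 1) * ∫ w in E, G w)
        ≤ (2*γ)⁻¹ * (2*β*Real.log 2) :=
      mul_le_mul_of_nonneg_left (by nlinarith) hγinv.le
    linarith
  -- integrability of llr and value
  have hmeasφ : Measurable fun w : ℝ => -Real.log (G w) := (hG_meas.log).neg
  have hWint : Integrable (fun w => -Real.log (G w)) (volume.withDensity f) := by
    rw [integrable_withDensity_iff hf_meas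
      (Filter.Eventually.of_forall fun w => lt_top_iff_ne_top.mpr (hf_top w))]
    exact hψ_int
  have h0 : Integrable (fun p : ℝ × ℝ => -Real.log (G p.2)) J := by
    have h0' : Integrable (fun w => -Real.log (G w)) (J.map Prod.snd) := by
      rw [hmW]; exact hWint
    exact (integrable_map_measure hmeasφ.aestronglyMeasurable
      measurable_snd.aemeasurable).mp h0'
  have hint : Integrable (llr J P) J := h0.congr hllr.symm
  have hval : ∫ p, llr J P p ∂J ≤ β / γ * Real.log 2 := by
    have h1 : ∫ p, llr J P p ∂J = ∫ p : ℝ × ℝ, -Real.log (G p.2) ∂J :=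
      integral_congr_ae hllr
    have h2 : ∫ p : ℝ × ℝ, -Real.log (G p.2) ∂J
        = ∫ w, -Real.log (G w) ∂(J.map Prod.snd) :=
      (integral_map measurable_snd.aemeasurable hmeasφ.aestronglyMeasurable).symm
    have h3 : J.map Prod.snd = volume.withDensity (fun w => ((f w).toNNReal : ℝ≥0∞)) := by
      rw [hmW]
      exact withDensity_congr_ae
        (Filter.Eventually.of_forall fun w => (ENNReal.coe_toNNReal (hf_top w)).symm)
    have h4 : ∫ w, -Real.log (G w) ∂(volume.withDensity fun w => ((f w).toNNReal : ℝ≥0∞))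
        = ∫ w, (f w).toNNReal • (-Real.log (G w)) :=
      integral_withDensity_eq_integral_smul hf_meas.ennreal_toNNReal _
    have h5 : ∀ w, (f w).toNNReal • (-Real.log (G w)) = ψ w := by
      intro w
      show ((f w).toNNReal : ℝ) * (-Real.log (G w)) = ψ w
      rw [mul_comm]
      rfl
    rw [h1, h2, h3, h4]
    simp only [h5]
    exact le_trans (integral_mono hψ_int hχ_int hψχ) hχ_val
  -- conclude
  show klDiv J ((μ.map X).prod (μ.map fun ω => X ω + Y ω)) ≤ _
  rw [hWlaw, ← hν_def, ← hP_def, klDiv, if_pos ⟨hac, hint⟩]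
  exact_mod_cast hval
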